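/- Let m ≥ 1 be an integer, n ≥ 1 an integer, and let d_1 ≤ d_2 ≤ … ≤ d_n be positive reals and e_1, …, e_n ≥ 0 be reals such that for every k with 1 ≤ k ≤ n: e_k ≤ d_k and Σ_{j=1}^{k} e_j ≤ m·d_k. Set p_j = e_j/(2 − 1/m) for each j. Then there exist an assignment of each job j to one of m processors and start times σ_j ≥ 0 such that σ_j + p_j ≤ d_j for every j (when p_j > 0) and the open intervals (σ_j, σ_j + p_j) of distinct jobs assigned to the same processor are pairwise disjoint; i.e., the jobs with common release date 0, deadlines d_j and processing times p_j admit a feasible non-preemptive schedule on m processors (obtained by Earliest Deadline First list scheduling). -/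

import Mathlib

open Finset

noncomputable def EDF.minIdx {m : ℕ} (hm : 0 < m) (L : Fin m → ℝ) : Fin m :=
  Classical.choose (Finset.exists_min_image Finset.univ L ⟨⟨0, hm⟩, Finset.mem_univ _⟩)

lemma EDF.minIdx_le {m : ℕ} (hm : 0 < m) (L : Fin m → ℝ) (q : Fin m) :
    L (EDF.minIdx hm L) ≤ L q := by
  have h := Classical.choose_spec
    (Finset.exists_min_image Finset.univ L ⟨⟨0, hm⟩, Finset.mem_univ _⟩)
  exact h.2 q (Finset.mem_univ q)

noncomputable def EDF.loads {m : ℕ} (hm : 0 < m) (p : ℕ → ℝ) : ℕ → Fin m → ℝ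
  | 0 => fun _ => 0
  | j + 1 =>
      Function.update (EDF.loads hm p j) (EDF.minIdx hm (EDF.loads hm p j))
        (EDF.loads hm p j (EDF.minIdx hm (EDF.loads hm p j)) + p j)

lemma EDF.loads_succ_self {m : ℕ} (hm : 0 < m) (p : ℕ → ℝ) (j : ℕ) :
    EDF.loads hm p (j + 1) (EDF.minIdx hm (EDF.loads hm p j)) =
      EDF.loads hm p j (EDF.minIdx hm (EDF.loads hm p j)) + p j := by
  simp [EDF.loads]

lemma EDF.loads_succ_ne {m : ℕ} (hm : 0 < m) (p : ℕ → ℝ) (j : ℕ) (q : Fin m)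
    (hq : q ≠ EDF.minIdx hm (EDF.loads hm p j)) :
    EDF.loads hm p (j + 1) q = EDF.loads hm p j q := by
  simp [EDF.loads, Function.update_of_ne hq]

lemma EDF.loads_le_succ {m : ℕ} (hm : 0 < m) (p : ℕ → ℝ) (hp : ∀ i, 0 ≤ p i)
    (j : ℕ) (q : Fin m) : EDF.loads hm p j q ≤ EDF.loads hm p (j + 1) q := by
  by_cases hq : q = EDF.minIdx hm (EDF.loads hm p j)
  · subst hq; rw [EDF.loads_succ_self]; linarith [hp j]
  · rw [EDF.loads_succ_ne hm p j q hq]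

lemma EDF.loads_mono {m : ℕ} (hm : 0 < m) (p : ℕ → ℝ) (hp : ∀ i, 0 ≤ p i)
    {i j : ℕ} (hij : i ≤ j) (q : Fin m) : EDF.loads hm p i q ≤ EDF.loads hm p j q := by
  induction j, hij using Nat.le_induction with
  | base => exact le_rfl
  | succ j hij ih => exact le_trans ih (EDF.loads_le_succ hm p hp j q)

lemma EDF.loads_nonneg {m : ℕ} (hm : 0 < m) (p : ℕ → ℝ) (hp : ∀ i, 0 ≤ p i)
    (j : ℕ) (q : Fin m) : 0 ≤ EDF.loads hm p j q :=
  EDF.loads_mono hm p hp (Nat.zero_le j) q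

lemma EDF.sum_loads {m : ℕ} (hm : 0 < m) (p : ℕ → ℝ) (j : ℕ) :
    ∑ q : Fin m, EDF.loads hm p j q = ∑ i ∈ Finset.range j, p i := by
  induction j with
  | zero => simp [EDF.loads]
  | succ j ih =>
      rw [Finset.sum_range_succ, ← ih]
      show ∑ q : Fin m, Function.update (EDF.loads hm p j)
        (EDF.minIdx hm (EDF.loads hm p j))
        (EDF.loads hm p j (EDF.minIdx hm (EDF.loads hm p j)) + p j) q = _
      rw [Finset.sum_update_of_mem (Finset.mem_univ _)]
      rw [← Finset.add_sum_erase Finset.univ (EDF.loads hm p j) (Finset.mem_univ _),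
        ← Finset.sdiff_singleton_eq_erase]
      ring

lemma EDF.card_mul_min_le {m : ℕ} (hm : 0 < m) (p : ℕ → ℝ) (j : ℕ) :
    (m : ℝ) * EDF.loads hm p j (EDF.minIdx hm (EDF.loads hm p j)) ≤
      ∑ i ∈ Finset.range j, p i := by
  rw [← EDF.sum_loads hm p j]
  calc (m : ℝ) * EDF.loads hm p j (EDF.minIdx hm (EDF.loads hm p j))
      = ∑ _q : Fin m, EDF.loads hm p j (EDF.minIdx hm (EDF.loads hm p j)) := by
        simp [Finset.sum_const, mul_comm]
    _ ≤ ∑ q : Fin m, EDF.loads hm p j q :=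
        Finset.sum_le_sum fun q _ => EDF.minIdx_le hm _ q

theorem edf_feasibility (m n : ℕ) (hm : 1 ≤ m) (hn : 1 ≤ n)
    (d e : Fin n → ℝ) (hd_pos : ∀ j, 0 < d j) (hd_mono : Monotone d)
    (he : ∀ j, 0 ≤ e j)
    (hfeas1 : ∀ k, e k ≤ d k)
    (hfeas2 : ∀ k : Fin n, ∑ j ∈ Finset.Iic k, e j ≤ (m : ℝ) * d k) :
    ∃ (proc : Fin n → Fin m) (σ : Fin n → ℝ),
      (∀ j, 0 ≤ σ j) ∧
      (∀ j, σ j + e j / (2 - 1 / (m : ℝ)) ≤ d j) ∧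
      (∀ j j', j ≠ j' → proc j = proc j' →
        Disjoint (Set.Ioo (σ j) (σ j + e j / (2 - 1 / (m : ℝ))))
          (Set.Ioo (σ j') (σ j' + e j' / (2 - 1 / (m : ℝ))))) := by
  have hm0 : 0 < m := hm
  have hmR : (1 : ℝ) ≤ (m : ℝ) := by exact_mod_cast hm
  have hmR0 : (0 : ℝ) < (m : ℝ) := by linarith
  set c : ℝ := 2 - 1 / (m : ℝ) with hc
  have hc1 : (1 : ℝ) ≤ c := by
    have h : 1 / (m : ℝ) ≤ 1 := by rw [div_le_one hmR0]; exact hmR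
    rw [hc]; linarith
  have hc0 : (0 : ℝ) < c := by linarith
  have hmc : (m : ℝ) * c = 2 * m - 1 := by
    rw [hc]; field_simp
  -- extended execution times and processing times
  set e' : ℕ → ℝ := fun i => if h : i < n then e ⟨i, h⟩ else 0 with he'
  set p : ℕ → ℝ := fun i => e' i / c with hpdef
  have hp0 : ∀ i, 0 ≤ p i := by
    intro i
    refine div_nonneg ?_ hc0.le
    simp only [he']
    split
    · exact he _
    · exact le_rfl
  -- the schedule
  set L := EDF.loads hm0 p with hL
  refine ⟨fun j => EDF.minIdx hm0 (L j.val),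
    fun j => L j.val (EDF.minIdx hm0 (L j.val)), ?_, ?_, ?_⟩
  · intro j; exact EDF.loads_nonneg hm0 p hp0 _ _
  · -- deadline feasibility
    intro k
    have hsum : ∑ i ∈ Finset.range k.val, e' i + e k = ∑ j ∈ Finset.Iic k, e j := by
      have h1 : ∑ j ∈ Finset.Iic k, e j = ∑ i ∈ Finset.Iic k.val, e' i := by
        rw [← Fin.map_valEmbedding_Iic, Finset.sum_map]
        apply Finset.sum_congr rfl
        intro j _
        simp [he', j.isLt]
      have h2 : Finset.Iic k.val = Finset.range (k.val + 1) := by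
        ext x; simp [Nat.lt_succ_iff]
      have h3 : e' k.val = e k := by simp [he', k.isLt]
      rw [h1, h2, Finset.sum_range_succ, h3]
    have hS : ∑ i ∈ Finset.range k.val, p i = (∑ i ∈ Finset.range k.val, e' i) / c := by
      rw [Finset.sum_div]
    have hmin := EDF.card_mul_min_le hm0 p k.val
    set σk := L k.val (EDF.minIdx hm0 (L k.val)) with hσk
    have hσk0 : 0 ≤ σk := EDF.loads_nonneg hm0 p hp0 _ _
    -- m * c * σk ≤ ∑ e' over range k
    have key : (m : ℝ) * c * σk + (m : ℝ) * e k ≤ (m : ℝ) * c * d k := by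
      have h4 : (m : ℝ) * c * σk ≤ ∑ i ∈ Finset.range k.val, e' i := by
        have := mul_le_mul_of_nonneg_left hmin hc0.le
        rw [hS] at this
        calc (m : ℝ) * c * σk = c * ((m : ℝ) * σk) := by ring
          _ ≤ c * ((∑ i ∈ Finset.range k.val, e' i) / c) := by
              exact mul_le_mul_of_nonneg_left (by rw [hS] at hmin; exact hmin) hc0.le
          _ = ∑ i ∈ Finset.range k.val, e' i := by field_simp
      have h5 := hfeas2 k
      have h6 := hfeas1 k
      have h7 : (m : ℝ) - 1 ≥ 0 := by linarith
      have h8 : ((m : ℝ) - 1) * e k ≤ ((m : ℝ) - 1) * d k :=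
        mul_le_mul_of_nonneg_left h6 h7
      rw [hmc]
      rw [← hsum] at h5
      nlinarith [h4, h5, h8]
    have key2 : c * σk + e k ≤ c * d k := by
      have := (mul_le_mul_iff_right₀ hmR0).mp (by linarith [key] : (m:ℝ) * (c * σk + e k) ≤ (m:ℝ) * (c * d k))
      exact this
    have : e k / c ≤ d k - σk := by
      rw [div_le_iff₀ hc0]; nlinarith [key2]
    linarith
  · -- disjointness
    intro j j' hne hproc
    dsimp only at hproc
    -- wlog on val order
    rcases lt_or_gt_of_ne (fun h : j.val = j'.val => hne (Fin.ext h)) with hlt | hlt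
    case _ =>
      apply Set.disjoint_left.mpr
      intro x hx hx'
      dsimp only at hx hx'
      -- end of j's interval = L (j+1) q ≤ L j' q = start of j'
      set q := EDF.minIdx hm0 (L j.val) with hq
      have hend : L (j.val + 1) q = L j.val q + p j.val :=
        EDF.loads_succ_self hm0 p j.val
      have hmono : L (j.val + 1) q ≤ L j'.val q :=
        EDF.loads_mono hm0 p hp0 hlt q
      have hpj : p j.val = e j / c := by
        simp [hpdef, he', j.isLt]
      have hstart' : L j'.val (EDF.minIdx hm0 (L j'.val)) = L j'.val q := by
        rw [← hproc]
      have h1 : x < L j.val q + e j / c := by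
        have := hx.2; rw [← hpj]; rw [← hpj] at this; linarith [hx.2]
      have h2 : L j'.val (EDF.minIdx hm0 (L j'.val)) < x := hx'.1
      rw [hstart'] at h2
      rw [← hpj] at h1
      linarith [hx.2, hend ▸ hmono]
    case _ =>
      apply Set.disjoint_right.mpr
      intro x hx hx'
      dsimp only at hx hx'
      set q := EDF.minIdx hm0 (L j'.val) with hq
      have hend : L (j'.val + 1) q = L j'.val q + p j'.val :=
        EDF.loads_succ_self hm0 p j'.val
      have hmono : L (j'.val + 1) q ≤ L j.val q :=
        EDF.loads_mono hm0 p hp0 hlt q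
      have hpj : p j'.val = e j' / c := by
        simp [hpdef, he', j'.isLt]
      have hstart' : L j.val (EDF.minIdx hm0 (L j.val)) = L j.val q := by
        rw [hproc]
      have h2 : L j.val (EDF.minIdx hm0 (L j.val)) < x := hx'.1
      rw [hstart'] at h2
      rw [← hpj] at hx
      linarith [hx.2, hend ▸ hmono]
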